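/- Let {ψ_j} be a frame for H with frame operator S and dual frame ψ̃_j = S^{-1}ψ_j satisfying the self-localization |⟨ψ̃_j, ψ̃_l⟩| ≤ c (1 + |j - l|)^{-s} with s > 1, and let f satisfy |⟨f, ψ_j⟩| ≤ c j^{-s}. Let P_n be the orthogonal projection onto H_n = span{ψ_1, …, ψ_n}. Then there exists C > 0 such that ‖f − P_n f‖ ≤ C n^{-(s-1/2)} for all n. -/

import Mathlib

lemma aux_zf_nonneg (s : ℝ) (m : ℕ) : 0 ≤ ((m:ℝ)+1) ^ (-s) :=
  Real.rpow_nonneg (by positivity) _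

lemma aux_zeta (s : ℝ) (hs : 1 < s) : Summable (fun m : ℕ => ((m:ℝ)+1) ^ (-s)) := by
  have h : Summable (fun n : ℕ => ((n:ℝ)) ^ (-s)) := Real.summable_nat_rpow.mpr (by linarith)
  have := (summable_nat_add_iff 1).mpr h
  refine this.congr (fun n => ?_)
  push_cast
  ring_nf

lemma aux_ker_nonneg (s : ℝ) (j l : ℕ) : 0 ≤ (1 + |(j:ℝ) - l|) ^ (-s) :=
  Real.rpow_nonneg (by positivity) _

lemma aux_ker_fin (s : ℝ) (hs : 1 < s) (j : ℕ) (F : Finset ℕ) :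
    ∑ l ∈ F, (1 + |(j:ℝ) - l|) ^ (-s) ≤ 2 * ∑' m : ℕ, ((m:ℝ)+1) ^ (-s) := by
  classical
  have hz := aux_zeta s hs
  have key : ∀ (G : Finset ℕ) (e : ℕ → ℕ), (∀ x ∈ G, ∀ y ∈ G, e x = e y → x = y) →
      (∀ l ∈ G, (1 + |(j:ℝ) - l|) ^ (-s) = ((e l : ℝ)+1) ^ (-s)) →
      ∑ l ∈ G, (1 + |(j:ℝ) - l|) ^ (-s) ≤ ∑' m : ℕ, ((m:ℝ)+1) ^ (-s) := by
    intro G e hinj heq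
    calc ∑ l ∈ G, (1 + |(j:ℝ) - l|) ^ (-s) = ∑ l ∈ G, ((e l : ℝ)+1) ^ (-s) :=
          Finset.sum_congr rfl heq
      _ = ∑ m ∈ G.image e, ((m:ℝ)+1) ^ (-s) :=
          (Finset.sum_image (f := fun m : ℕ => ((m:ℝ)+1) ^ (-s)) hinj).symm
      _ ≤ ∑' m : ℕ, ((m:ℝ)+1) ^ (-s) := Summable.sum_le_tsum _ (fun i _ => aux_zf_nonneg s i) hz
  rw [← Finset.sum_filter_add_sum_filter_not F (· ≤ j)]
  have h1 : ∑ l ∈ F.filter (· ≤ j), (1 + |(j:ℝ) - l|) ^ (-s) ≤ ∑' m : ℕ, ((m:ℝ)+1) ^ (-s) := by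
    refine key _ (fun l => j - l) ?_ ?_
    · intro x hx y hy hxy
      simp only [Finset.mem_filter] at hx hy
      have hxy' : j - x = j - y := hxy
      omega
    · intro l hl
      simp only [Finset.mem_filter] at hl
      have hc : ((j - l : ℕ) : ℝ) = (j:ℝ) - l := by
        push_cast [Nat.cast_sub hl.2]; ring
      have habs : |(j:ℝ) - l| = ((j - l : ℕ) : ℝ) := by
        rw [hc, abs_of_nonneg (sub_nonneg.mpr (by exact_mod_cast hl.2))]
      rw [habs]; ring_nf
  have h2 : ∑ l ∈ F.filter (fun l => ¬ l ≤ j), (1 + |(j:ℝ) - l|) ^ (-s) ≤ ∑' m : ℕ, ((m:ℝ)+1) ^ (-s) := by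
    refine key _ (fun l => l - j) ?_ ?_
    · intro x hx y hy hxy
      simp only [Finset.mem_filter, not_le] at hx hy
      have hxy' : x - j = y - j := hxy
      omega
    · intro l hl
      simp only [Finset.mem_filter, not_le] at hl
      have hlj : j ≤ l := le_of_lt hl.2
      have hc : ((l - j : ℕ) : ℝ) = (l:ℝ) - j := by
        push_cast [Nat.cast_sub hlj]; ring
      have habs : |(j:ℝ) - l| = ((l - j : ℕ) : ℝ) := by
        rw [hc, abs_of_nonpos (sub_nonpos.mpr (by exact_mod_cast hlj))]
        ring
      rw [habs]; ring_nf
  linarith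

lemma aux_ker_summable (s : ℝ) (hs : 1 < s) (j : ℕ) :
    Summable (fun l : ℕ => (1 + |(j:ℝ) - l|) ^ (-s)) :=
  summable_of_sum_range_le (fun l => aux_ker_nonneg s j l)
    (fun n => aux_ker_fin s hs j (Finset.range n))

lemma aux_ker_tsum (s : ℝ) (hs : 1 < s) (j : ℕ) :
    (∑' l : ℕ, (1 + |(j:ℝ) - l|) ^ (-s)) ≤ 2 * ∑' m : ℕ, ((m:ℝ)+1) ^ (-s) :=
  Summable.tsum_le_of_sum_range_le (aux_ker_summable s hs j)
    (fun n => aux_ker_fin s hs j (Finset.range n))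

lemma aux_conv_pt (s : ℝ) (hs : 1 < s) (j l : ℕ) :
    ((l:ℝ)+1) ^ (-s) * (1 + |(j:ℝ) - l|) ^ (-s)
      ≤ (2:ℝ) ^ s * ((j:ℝ)+1) ^ (-s) * (((l:ℝ)+1) ^ (-s) + (1 + |(j:ℝ) - l|) ^ (-s)) := by
  have hs0 : (0:ℝ) ≤ s := by linarith
  have hj1 : (0:ℝ) < (j:ℝ) + 1 := by positivity
  have hhalf : ∀ x : ℝ, 0 < x → ((j:ℝ)+1) ≤ 2 * x → x ^ (-s) ≤ (2:ℝ) ^ s * ((j:ℝ)+1) ^ (-s) := by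
    intro x hx h2x
    have h1 : (((j:ℝ)+1)/2) ^ (-s) = (2:ℝ) ^ s * ((j:ℝ)+1) ^ (-s) := by
      rw [Real.div_rpow (le_of_lt hj1) (by norm_num), Real.rpow_neg (by norm_num : (0:ℝ) ≤ 2)]
      field_simp
    rw [← h1]
    exact Real.rpow_le_rpow_of_nonpos (by positivity) (by linarith) (by linarith)
  rcases le_or_gt (2 * l) j with h | h
  · -- l small : kernel factor is small
    have hl_le : (l:ℝ) ≤ (j:ℝ) := by exact_mod_cast (by omega : l ≤ j)
    have h2 : 2 * (l:ℝ) ≤ (j:ℝ) := by exact_mod_cast h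
    have habs : |(j:ℝ) - l| = (j:ℝ) - l := abs_of_nonneg (by linarith)
    have hker : (1 + |(j:ℝ) - l|) ^ (-s) ≤ (2:ℝ) ^ s * ((j:ℝ)+1) ^ (-s) := by
      rw [habs]
      exact hhalf _ (by linarith) (by linarith)
    have hl0 : 0 ≤ ((l:ℝ)+1) ^ (-s) := aux_zf_nonneg s l
    have hker0 : 0 ≤ (1 + |(j:ℝ) - l|) ^ (-s) := aux_ker_nonneg s j l
    nlinarith [mul_le_mul_of_nonneg_left hker hl0,
      mul_nonneg (mul_nonneg (Real.rpow_nonneg (by norm_num : (0:ℝ) ≤ 2) s) (aux_zf_nonneg s j)) hker0]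
  · -- l large : zeta factor is small
    have hzf : ((l:ℝ)+1) ^ (-s) ≤ (2:ℝ) ^ s * ((j:ℝ)+1) ^ (-s) := by
      refine hhalf _ (by positivity) ?_
      have h2 : (j:ℝ) + 1 ≤ 2 * l := by exact_mod_cast (by omega : j + 1 ≤ 2 * l)
      linarith
    have hker0 : 0 ≤ (1 + |(j:ℝ) - l|) ^ (-s) := aux_ker_nonneg s j l
    have hl0 : 0 ≤ ((l:ℝ)+1) ^ (-s) := aux_zf_nonneg s l
    nlinarith [mul_le_mul_of_nonneg_right hzf hker0,
      mul_nonneg (mul_nonneg (Real.rpow_nonneg (by norm_num : (0:ℝ) ≤ 2) s) (aux_zf_nonneg s j)) hl0]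

lemma aux_conv_summable (s : ℝ) (hs : 1 < s) (j : ℕ) :
    Summable (fun l : ℕ => ((l:ℝ)+1) ^ (-s) * (1 + |(j:ℝ) - l|) ^ (-s)) := by
  refine Summable.of_nonneg_of_le (fun l => mul_nonneg (aux_zf_nonneg s l) (aux_ker_nonneg s j l))
    (fun l => ?_) (aux_zeta s hs)
  have h1 : (1 + |(j:ℝ) - l|) ^ (-s) ≤ 1 := by
    apply Real.rpow_le_one_of_one_le_of_nonpos (le_add_of_nonneg_right (abs_nonneg _)) (by linarith)
  calc ((l:ℝ)+1) ^ (-s) * (1 + |(j:ℝ) - l|) ^ (-s) ≤ ((l:ℝ)+1) ^ (-s) * 1 :=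
        mul_le_mul_of_nonneg_left h1 (aux_zf_nonneg s l)
    _ = ((l:ℝ)+1) ^ (-s) := mul_one _

lemma aux_conv (s : ℝ) (hs : 1 < s) (j : ℕ) :
    (∑' l : ℕ, ((l:ℝ)+1) ^ (-s) * (1 + |(j:ℝ) - l|) ^ (-s))
      ≤ (3 * (2:ℝ) ^ s * ∑' m : ℕ, ((m:ℝ)+1) ^ (-s)) * ((j:ℝ)+1) ^ (-s) := by
  have hz := aux_zeta s hs
  have hk := aux_ker_summable s hs j
  have hsum2 : Summable (fun l : ℕ => (2:ℝ) ^ s * ((j:ℝ)+1) ^ (-s) * (((l:ℝ)+1) ^ (-s) + (1 + |(j:ℝ) - l|) ^ (-s))) :=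
    ((hz.add hk).mul_left _)
  calc (∑' l : ℕ, ((l:ℝ)+1) ^ (-s) * (1 + |(j:ℝ) - l|) ^ (-s))
      ≤ ∑' l : ℕ, (2:ℝ) ^ s * ((j:ℝ)+1) ^ (-s) * (((l:ℝ)+1) ^ (-s) + (1 + |(j:ℝ) - l|) ^ (-s)) :=
        Summable.tsum_le_tsum (fun l => aux_conv_pt s hs j l) (aux_conv_summable s hs j) hsum2
    _ = (2:ℝ) ^ s * ((j:ℝ)+1) ^ (-s) * ((∑' m : ℕ, ((m:ℝ)+1) ^ (-s)) + ∑' l : ℕ, (1 + |(j:ℝ) - l|) ^ (-s)) := by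
        rw [tsum_mul_left, Summable.tsum_add hz hk]
    _ ≤ (3 * (2:ℝ) ^ s * ∑' m : ℕ, ((m:ℝ)+1) ^ (-s)) * ((j:ℝ)+1) ^ (-s) := by
        have h2 := aux_ker_tsum s hs j
        have h20 : (0:ℝ) ≤ (2:ℝ) ^ s := Real.rpow_nonneg (by norm_num) s
        have hj0 : (0:ℝ) ≤ ((j:ℝ)+1) ^ (-s) := aux_zf_nonneg s j
        nlinarith [mul_nonneg h20 hj0]

lemma aux_step (a x : ℝ) (ha : 1 ≤ a) (hx : 1 ≤ x) :
    a * (x+1) ^ (-(a+1)) ≤ x ^ (-a) - (x+1) ^ (-a) := by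
  have hx0 : (0:ℝ) < x := by linarith
  have hx1 : (0:ℝ) < x + 1 := by linarith
  set X := x ^ a with hXdef
  set Y := (x+1) ^ a with hYdef
  have hX : 0 < X := Real.rpow_pos_of_pos hx0 a
  have hYpos : 0 < Y := Real.rpow_pos_of_pos hx1 a
  have hbern : 1 + a * (1/x) ≤ (1 + 1/x) ^ a :=
    one_add_mul_self_le_rpow_one_add
      (le_trans (by norm_num : (-1:ℝ) ≤ 0) (by positivity)) ha
  have hdiv : (1 + 1/x) ^ a = Y / X := by
    rw [hYdef, hXdef, ← Real.div_rpow (by linarith) hx0.le]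
    congr 1
    field_simp
  have hY : X * (1 + a/(x+1)) ≤ Y := by
    have h1 : 1 + a/(x+1) ≤ 1 + a * (1/x) := by
      have : a/(x+1) ≤ a/x := by
        apply div_le_div_of_nonneg_left (by linarith) hx0 (by linarith)
      rw [mul_one_div]; linarith
    have h2 : X * (1 + a * (1/x)) ≤ X * (Y/X) := by
      apply mul_le_mul_of_nonneg_left (hbern.trans_eq hdiv) hX.le
    rw [mul_div_cancel₀ _ (ne_of_gt hX)] at h2
    calc X * (1 + a/(x+1)) ≤ X * (1 + a * (1/x)) := mul_le_mul_of_nonneg_left h1 hX.le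
      _ ≤ Y := h2
  have key : a * X ≤ (Y - X) * (x+1) := by
    have h3 : X*(1 + a/(x+1))*(x+1) ≤ Y*(x+1) := mul_le_mul_of_nonneg_right hY hx1.le
    have h4 : X*(1 + a/(x+1))*(x+1) = X*(x+1) + a*X := by field_simp
    linarith
  have hrw1 : (x+1) ^ (-(a+1)) = (Y * (x+1))⁻¹ := by
    rw [Real.rpow_neg hx1.le, Real.rpow_add hx1, Real.rpow_one]
  have hrw2 : x ^ (-a) = X⁻¹ := Real.rpow_neg hx0.le a
  have hrw3 : (x+1) ^ (-a) = Y⁻¹ := Real.rpow_neg hx1.le a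
  rw [hrw1, hrw2, hrw3]
  rw [inv_eq_one_div, inv_eq_one_div, inv_eq_one_div,
    div_sub_div _ _ (ne_of_gt hX) (ne_of_gt hYpos), mul_one_div,
    div_le_div_iff₀ (by positivity) (by positivity)]
  nlinarith [mul_le_mul_of_nonneg_right key hYpos.le]

lemma aux_tail (s : ℝ) (hs : 1 < s) (n : ℕ) (hn : 1 ≤ n) :
    Summable (fun k : ℕ => ((n:ℝ) + k + 1) ^ (-(2*s))) ∧
    (∑' k : ℕ, ((n:ℝ) + k + 1) ^ (-(2*s))) ≤ (1/(2*s-1)) * (n:ℝ) ^ (1-2*s) := by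
  set a := 2*s - 1 with hadef
  have ha : 1 ≤ a := by simp [hadef]; linarith
  have ha0 : 0 < a := by linarith
  have hn1 : (1:ℝ) ≤ (n:ℝ) := by exact_mod_cast hn
  set f : ℕ → ℝ := fun k => ((n:ℝ) + k) ^ (-a) with hfdef
  have hterm : ∀ k : ℕ, ((n:ℝ) + k + 1) ^ (-(2*s)) ≤ (1/a) * (f k - f (k+1)) := by
    intro k
    have hx : (1:ℝ) ≤ (n:ℝ) + k := by
      have : (0:ℝ) ≤ (k:ℝ) := Nat.cast_nonneg k
      linarith
    have hstep := aux_step a ((n:ℝ) + k) ha hx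
    have h2s : -(2*s) = -(a+1) := by rw [hadef]; ring
    have hfk1 : f (k+1) = ((n:ℝ) + k + 1) ^ (-a) := by
      simp only [hfdef]; push_cast; ring_nf
    have hmain : ((n:ℝ) + k + 1) ^ (-(a+1))
        ≤ (1/a) * (((n:ℝ)+k) ^ (-a) - ((n:ℝ)+k+1) ^ (-a)) := by
      rw [one_div, inv_mul_eq_div, le_div_iff₀ ha0]
      linarith [hstep]
    calc ((n:ℝ) + k + 1) ^ (-(2*s)) = ((n:ℝ) + k + 1) ^ (-(a+1)) := by rw [h2s]
      _ ≤ (1/a) * (((n:ℝ)+k) ^ (-a) - ((n:ℝ)+k+1) ^ (-a)) := hmain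
      _ = (1/a) * (f k - f (k+1)) := by rw [hfk1]
  have hnonneg : ∀ k : ℕ, (0:ℝ) ≤ ((n:ℝ) + k + 1) ^ (-(2*s)) :=
    fun k => Real.rpow_nonneg (by positivity) _
  have hbound : ∀ m : ℕ, ∑ k ∈ Finset.range m, ((n:ℝ) + k + 1) ^ (-(2*s))
      ≤ (1/(2*s-1)) * (n:ℝ) ^ (1-2*s) := by
    intro m
    have h1 : ∑ k ∈ Finset.range m, ((n:ℝ) + k + 1) ^ (-(2*s))
        ≤ ∑ k ∈ Finset.range m, (1/a) * (f k - f (k+1)) :=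
      Finset.sum_le_sum (fun k _ => hterm k)
    have h2 : ∑ k ∈ Finset.range m, (1/a) * (f k - f (k+1)) = (1/a) * (f 0 - f m) := by
      rw [← Finset.mul_sum, Finset.sum_range_sub' f m]
    have hf0 : f 0 = (n:ℝ) ^ (1-2*s) := by
      rw [hfdef]
      norm_num
      congr 1
      rw [hadef]; ring
    have hfm : 0 ≤ f m := Real.rpow_nonneg (by positivity) _
    have h1a : 0 < 1/a := by positivity
    calc ∑ k ∈ Finset.range m, ((n:ℝ) + k + 1) ^ (-(2*s)) ≤ (1/a) * (f 0 - f m) := h1.trans_eq h2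
      _ ≤ (1/a) * f 0 := by nlinarith
      _ = (1/(2*s-1)) * (n:ℝ) ^ (1-2*s) := by rw [hf0, hadef]
  exact ⟨summable_of_sum_range_le hnonneg hbound,
    Summable.tsum_le_of_sum_range_le (summable_of_sum_range_le hnonneg hbound) hbound⟩

lemma aux_bessel {H : Type*} [NormedAddCommGroup H] [InnerProductSpace ℂ H]
    (ψ : ℕ → H) (B : ℝ) (hB : 0 < B)
    (hsum : ∀ f : H, Summable fun j : ℕ => ‖(inner ℂ (ψ j) f : ℂ)‖ ^ 2)
    (hup : ∀ f : H, (∑' j : ℕ, ‖(inner ℂ (ψ j) f : ℂ)‖ ^ 2) ≤ B * ‖f‖ ^ 2)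
    (b : ℕ → ℂ) (F : Finset ℕ) :
    ‖∑ j ∈ F, b j • ψ j‖ ≤ Real.sqrt B * Real.sqrt (∑ j ∈ F, ‖b j‖ ^ 2) := by
  set v := ∑ j ∈ F, b j • ψ j with hvdef
  have hb2 : (0:ℝ) ≤ ∑ j ∈ F, ‖b j‖ ^ 2 := Finset.sum_nonneg (fun j _ => by positivity)
  rcases eq_or_lt_of_le (norm_nonneg v) with hv0 | hvpos
  · rw [← hv0]
    positivity
  have hinner : (inner ℂ v v : ℂ) = ∑ j ∈ F, (starRingEnd ℂ) (b j) * (inner ℂ (ψ j) v : ℂ) := by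
    rw [hvdef, sum_inner]
    exact Finset.sum_congr rfl (fun j _ => inner_smul_left _ _ _)
  have hre : ‖v‖ ^ 2 = RCLike.re (inner ℂ v v : ℂ) := by
    rw [← @inner_self_eq_norm_sq ℂ]
  have h1 : ‖v‖ ^ 2 ≤ ∑ j ∈ F, ‖b j‖ * ‖(inner ℂ (ψ j) v : ℂ)‖ := by
    rw [hre, hinner]
    calc RCLike.re (∑ j ∈ F, (starRingEnd ℂ) (b j) * (inner ℂ (ψ j) v : ℂ))
        ≤ ‖∑ j ∈ F, (starRingEnd ℂ) (b j) * (inner ℂ (ψ j) v : ℂ)‖ := RCLike.re_le_norm _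
      _ ≤ ∑ j ∈ F, ‖(starRingEnd ℂ) (b j) * (inner ℂ (ψ j) v : ℂ)‖ := norm_sum_le _ _
      _ = ∑ j ∈ F, ‖b j‖ * ‖(inner ℂ (ψ j) v : ℂ)‖ := by
          refine Finset.sum_congr rfl (fun j _ => ?_)
          rw [norm_mul, RCLike.norm_conj]
  have hcs : (∑ j ∈ F, ‖b j‖ * ‖(inner ℂ (ψ j) v : ℂ)‖) ^ 2
      ≤ (∑ j ∈ F, ‖b j‖ ^ 2) * ∑ j ∈ F, ‖(inner ℂ (ψ j) v : ℂ)‖ ^ 2 :=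
    Finset.sum_mul_sq_le_sq_mul_sq F _ _
  have hbes : ∑ j ∈ F, ‖(inner ℂ (ψ j) v : ℂ)‖ ^ 2 ≤ B * ‖v‖ ^ 2 :=
    le_trans (Summable.sum_le_tsum F (fun j _ => by positivity) (hsum v)) (hup v)
  have h2 : ∑ j ∈ F, ‖b j‖ * ‖(inner ℂ (ψ j) v : ℂ)‖
      ≤ Real.sqrt (∑ j ∈ F, ‖b j‖ ^ 2) * Real.sqrt (B * ‖v‖ ^ 2) := by
    have hnn : (0:ℝ) ≤ ∑ j ∈ F, ‖b j‖ * ‖(inner ℂ (ψ j) v : ℂ)‖ :=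
      Finset.sum_nonneg (fun j _ => by positivity)
    calc ∑ j ∈ F, ‖b j‖ * ‖(inner ℂ (ψ j) v : ℂ)‖
        = Real.sqrt ((∑ j ∈ F, ‖b j‖ * ‖(inner ℂ (ψ j) v : ℂ)‖) ^ 2) := by
          rw [Real.sqrt_sq hnn]
      _ ≤ Real.sqrt ((∑ j ∈ F, ‖b j‖ ^ 2) * (B * ‖v‖ ^ 2)) := by
          apply Real.sqrt_le_sqrt
          calc (∑ j ∈ F, ‖b j‖ * ‖(inner ℂ (ψ j) v : ℂ)‖) ^ 2
              ≤ (∑ j ∈ F, ‖b j‖ ^ 2) * ∑ j ∈ F, ‖(inner ℂ (ψ j) v : ℂ)‖ ^ 2 := hcs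
            _ ≤ (∑ j ∈ F, ‖b j‖ ^ 2) * (B * ‖v‖ ^ 2) :=
                mul_le_mul_of_nonneg_left hbes hb2
      _ = Real.sqrt (∑ j ∈ F, ‖b j‖ ^ 2) * Real.sqrt (B * ‖v‖ ^ 2) := Real.sqrt_mul hb2 _
  have h3 : Real.sqrt (B * ‖v‖ ^ 2) = Real.sqrt B * ‖v‖ := by
    rw [Real.sqrt_mul hB.le, Real.sqrt_sq (norm_nonneg v)]
  have h4 : ‖v‖ * ‖v‖ ≤ (Real.sqrt B * Real.sqrt (∑ j ∈ F, ‖b j‖ ^ 2)) * ‖v‖ := by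
    have := h1.trans h2
    rw [h3] at this
    calc ‖v‖ * ‖v‖ = ‖v‖ ^ 2 := (sq ‖v‖).symm
      _ ≤ Real.sqrt (∑ j ∈ F, ‖b j‖ ^ 2) * (Real.sqrt B * ‖v‖) := this
      _ = (Real.sqrt B * Real.sqrt (∑ j ∈ F, ‖b j‖ ^ 2)) * ‖v‖ := by ring
  exact le_of_mul_le_mul_right h4 hvpos

lemma aux_selfadj {H : Type*} [NormedAddCommGroup H] [InnerProductSpace ℂ H]
    (ψ : ℕ → H) (S : H →L[ℂ] H)
    (hS : ∀ f : H, HasSum (fun j : ℕ => (inner ℂ (ψ j) f : ℂ) • ψ j) (S f)) :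
    ∀ g h : H, (inner ℂ (S g) h : ℂ) = inner ℂ g (S h) := by
  intro g h
  have h1 : HasSum (fun j : ℕ => (inner ℂ h ((inner ℂ (ψ j) g : ℂ) • ψ j) : ℂ)) (inner ℂ h (S g)) :=
    (innerSL ℂ h).hasSum (hS g)
  have h1s := h1.star
  have h2 : HasSum (fun j : ℕ => (inner ℂ g ((inner ℂ (ψ j) h : ℂ) • ψ j) : ℂ)) (inner ℂ g (S h)) :=
    (innerSL ℂ g).hasSum (hS h)
  have e1 : (fun j : ℕ => star (inner ℂ h ((inner ℂ (ψ j) g : ℂ) • ψ j) : ℂ))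
      = fun j : ℕ => (inner ℂ g ((inner ℂ (ψ j) h : ℂ) • ψ j) : ℂ) := by
    funext j
    simp only [inner_smul_right, star_mul', RCLike.star_def, inner_conj_symm]
    ring
  rw [e1] at h1s
  have : star (inner ℂ h (S g) : ℂ) = inner ℂ g (S h) := h1s.unique h2
  rw [← this, RCLike.star_def, inner_conj_symm]

/-- Lemma 3.2: under intrinsic localization of the frame and dual frame with
rate `s > 1` and coefficient decay `|⟨f,ψ_j⟩| ≤ c j^{-s}`, the orthogonal projection `P n`
onto `H_n = span{ψ_1,…,ψ_n}` satisfies `‖f - P_n f‖ ≤ C n^{-(s-1/2)}`.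
(Indices shifted by one: `ψ j` represents `ψ_{j+1}`, so `H_n` is spanned by `ψ i`, `i < n`.) -/
theorem stmt_6 {H : Type*} [NormedAddCommGroup H] [InnerProductSpace ℂ H]
    [CompleteSpace H] [TopologicalSpace.SeparableSpace H]
    (ψ : ℕ → H) (A B : ℝ) (hA : 0 < A) (hB : 0 < B)
    (hsum : ∀ f : H, Summable fun j : ℕ => ‖(inner ℂ (ψ j) f : ℂ)‖ ^ 2)
    (hlow : ∀ f : H, A * ‖f‖ ^ 2 ≤ ∑' j : ℕ, ‖(inner ℂ (ψ j) f : ℂ)‖ ^ 2)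
    (hup : ∀ f : H, (∑' j : ℕ, ‖(inner ℂ (ψ j) f : ℂ)‖ ^ 2) ≤ B * ‖f‖ ^ 2)
    (S Sinv : H →L[ℂ] H)
    (hS : ∀ f : H, HasSum (fun j : ℕ => (inner ℂ (ψ j) f : ℂ) • ψ j) (S f))
    (hSinv₁ : ∀ f, Sinv (S f) = f) (hSinv₂ : ∀ f, S (Sinv f) = f)
    (c₀ c s : ℝ) (hc₀ : 0 < c₀) (hc : 0 < c) (hs : 1 < s)
    (hloc : ∀ j l : ℕ,
      ‖(inner ℂ (ψ j) (ψ l) : ℂ)‖ ≤ c₀ * (1 + |(j : ℝ) - (l : ℝ)|) ^ (-s))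
    (hdualloc : ∀ j l : ℕ,
      ‖(inner ℂ (Sinv (ψ j)) (Sinv (ψ l)) : ℂ)‖ ≤ c * (1 + |(j : ℝ) - (l : ℝ)|) ^ (-s))
    (f : H)
    (hdecay : ∀ j : ℕ, ‖(inner ℂ (ψ j) f : ℂ)‖ ≤ c * ((j : ℝ) + 1) ^ (-s))
    (P : ℕ → H → H)
    (hPmem : ∀ n g, P n g ∈ Submodule.span ℂ (ψ '' {i | i < n}))
    (hPorth : ∀ n g, ∀ h ∈ Submodule.span ℂ (ψ '' {i | i < n}),
      (inner ℂ (g - P n g) h : ℂ) = 0) :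
    ∃ C : ℝ, 0 < C ∧ ∀ n : ℕ, 1 ≤ n →
      ‖f - P n f‖ ≤ C * (n : ℝ) ^ (-(s - 1 / 2)) := by
  classical
  have hsa := aux_selfadj ψ S hS
  have hsinv_sa : ∀ x y : H, (inner ℂ (Sinv x) y : ℂ) = inner ℂ x (Sinv y) := by
    intro x y
    calc (inner ℂ (Sinv x) y : ℂ) = inner ℂ (Sinv x) (S (Sinv y)) := by rw [hSinv₂]
      _ = inner ℂ (S (Sinv x)) (Sinv y) := (hsa (Sinv x) (Sinv y)).symm
      _ = inner ℂ x (Sinv y) := by rw [hSinv₂]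
  set Z := ∑' m : ℕ, ((m:ℝ)+1) ^ (-s) with hZdef
  have hZ1 : (1:ℝ) ≤ Z := by
    have h0 : (((0:ℕ):ℝ)+1) ^ (-s) = 1 := by norm_num
    have := Summable.le_tsum (aux_zeta s hs) 0 (fun j _ => aux_zf_nonneg s j)
    rw [h0] at this
    exact this
  have hZ0 : (0:ℝ) < Z := lt_of_lt_of_le one_pos hZ1
  set K := 3 * (2:ℝ) ^ s * Z with hKdef
  have hK : 0 < K :=
    mul_pos (mul_pos (by norm_num) (Real.rpow_pos_of_pos two_pos s)) hZ0
  set C₁ := c * c * K with hC₁def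
  have hC₁ : 0 < C₁ := mul_pos (mul_pos hc hc) hK
  set a : ℕ → ℂ := fun j => (inner ℂ (ψ j) (Sinv f) : ℂ) with hadef
  have hfsum : HasSum (fun j : ℕ => a j • ψ j) f := by
    have := hS (Sinv f); rwa [hSinv₂] at this
  -- coefficient decay
  have hexp : ∀ j : ℕ, HasSum
      (fun l : ℕ => (inner ℂ (ψ l) f : ℂ) * (inner ℂ (Sinv (ψ j)) (Sinv (ψ l)) : ℂ)) (a j) := by
    intro j
    have h1 : HasSum (fun l : ℕ => (inner ℂ (ψ l) f : ℂ) • Sinv (ψ l)) f := by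
      have h := Sinv.hasSum (hS f)
      rw [hSinv₁] at h
      refine h.congr (fun F => Finset.sum_congr rfl (fun b _ => ?_))
      simp [map_smul]
    have h2 := (innerSL ℂ (Sinv (ψ j))).hasSum h1
    have haj : (inner ℂ (Sinv (ψ j)) f : ℂ) = a j := hsinv_sa (ψ j) f
    rw [innerSL_apply_apply, haj] at h2
    refine h2.congr (fun F => Finset.sum_congr rfl (fun b _ => ?_))
    simp [inner_smul_right]
  have hadecay : ∀ j : ℕ, ‖a j‖ ≤ C₁ * ((j:ℝ)+1) ^ (-s) := by
    intro j
    have hx := hexp j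
    have hb : ∀ l : ℕ, ‖(inner ℂ (ψ l) f : ℂ) * (inner ℂ (Sinv (ψ j)) (Sinv (ψ l)) : ℂ)‖
        ≤ c * c * (((l:ℝ)+1) ^ (-s) * (1 + |(j:ℝ) - l|) ^ (-s)) := by
      intro l
      rw [norm_mul]
      calc ‖(inner ℂ (ψ l) f : ℂ)‖ * ‖(inner ℂ (Sinv (ψ j)) (Sinv (ψ l)) : ℂ)‖
          ≤ (c * ((l:ℝ)+1) ^ (-s)) * (c * (1 + |(j:ℝ) - l|) ^ (-s)) :=
            mul_le_mul (hdecay l) (hdualloc j l) (norm_nonneg _) (by positivity)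
        _ = c * c * (((l:ℝ)+1) ^ (-s) * (1 + |(j:ℝ) - l|) ^ (-s)) := by ring
    have hs2 : Summable (fun l : ℕ =>
        c * c * (((l:ℝ)+1) ^ (-s) * (1 + |(j:ℝ) - l|) ^ (-s))) :=
      (aux_conv_summable s hs j).mul_left (c*c)
    have hnsum : Summable (fun l : ℕ =>
        ‖(inner ℂ (ψ l) f : ℂ) * (inner ℂ (Sinv (ψ j)) (Sinv (ψ l)) : ℂ)‖) :=
      Summable.of_nonneg_of_le (fun l => norm_nonneg _) hb hs2
    calc ‖a j‖ = ‖∑' l : ℕ, (inner ℂ (ψ l) f : ℂ) * (inner ℂ (Sinv (ψ j)) (Sinv (ψ l)) : ℂ)‖ := by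
          rw [hx.tsum_eq]
      _ ≤ ∑' l : ℕ, ‖(inner ℂ (ψ l) f : ℂ) * (inner ℂ (Sinv (ψ j)) (Sinv (ψ l)) : ℂ)‖ :=
          norm_tsum_le_tsum_norm hnsum
      _ ≤ ∑' l : ℕ, c * c * (((l:ℝ)+1) ^ (-s) * (1 + |(j:ℝ) - l|) ^ (-s)) :=
          Summable.tsum_le_tsum hb hnsum hs2
      _ = c * c * ∑' l : ℕ, ((l:ℝ)+1) ^ (-s) * (1 + |(j:ℝ) - l|) ^ (-s) := tsum_mul_left
      _ ≤ c * c * ((3 * (2:ℝ) ^ s * Z) * ((j:ℝ)+1) ^ (-s)) :=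
          mul_le_mul_of_nonneg_left (aux_conv s hs j) (by positivity)
      _ = C₁ * ((j:ℝ)+1) ^ (-s) := by rw [hC₁def, hKdef]; ring
  -- the constant
  set C := Real.sqrt B * C₁ * Real.sqrt (1/(2*s-1)) with hCdef
  have hC : 0 < C := by
    apply mul_pos (mul_pos (Real.sqrt_pos.mpr hB) hC₁)
    exact Real.sqrt_pos.mpr (div_pos one_pos (by linarith))
  refine ⟨C, hC, fun n hn => ?_⟩
  set g := ∑ j ∈ Finset.range n, a j • ψ j with hgdef
  have hgmem : g ∈ Submodule.span ℂ (ψ '' {i | i < n}) := by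
    refine Submodule.sum_mem _ (fun j hj => Submodule.smul_mem _ _ (Submodule.subset_span ?_))
    exact ⟨j, Finset.mem_range.mp hj, rfl⟩
  have ht : HasSum (fun k : ℕ => a (k+n) • ψ (k+n)) (f - g) := by
    refine (hasSum_nat_add_iff (f := fun j : ℕ => a j • ψ j) n).mpr ?_
    rw [← hgdef, sub_add_cancel]
    exact hfsum
  -- square-summable tail bound
  have hcast : ∀ k : ℕ, (((k+n:ℕ):ℝ)+1) = (n:ℝ) + k + 1 := by
    intro k; push_cast; ring
  have hsqb : ∀ k : ℕ, ‖a (k+n)‖^2 ≤ C₁^2 * ((n:ℝ) + k + 1) ^ (-(2*s)) := by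
    intro k
    have h1 := hadecay (k+n)
    rw [hcast k] at h1
    have h2 : ‖a (k+n)‖^2 ≤ (C₁ * ((n:ℝ) + k + 1) ^ (-s))^2 := by
      apply pow_le_pow_left₀ (norm_nonneg _) h1
    refine h2.trans_eq ?_
    have hpos : (0:ℝ) < (n:ℝ) + k + 1 := by positivity
    rw [mul_pow, ← Real.rpow_natCast (((n:ℝ) + k + 1) ^ (-s)) 2, ← Real.rpow_mul hpos.le]
    norm_num
    left
    ring
  have htail := aux_tail s hs n hn
  have hsq : Summable (fun k : ℕ => ‖a (k+n)‖^2) :=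
    Summable.of_nonneg_of_le (fun k => by positivity) hsqb (htail.1.mul_left _)
  have hT : (∑' k : ℕ, ‖a (k+n)‖^2) ≤ C₁^2 * ((1/(2*s-1)) * (n:ℝ) ^ (1-2*s)) := by
    calc (∑' k : ℕ, ‖a (k+n)‖^2) ≤ ∑' k : ℕ, C₁^2 * ((n:ℝ) + k + 1) ^ (-(2*s)) :=
        Summable.tsum_le_tsum hsqb hsq (htail.1.mul_left _)
      _ = C₁^2 * ∑' k : ℕ, ((n:ℝ) + k + 1) ^ (-(2*s)) := tsum_mul_left
      _ ≤ C₁^2 * ((1/(2*s-1)) * (n:ℝ) ^ (1-2*s)) :=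
        mul_le_mul_of_nonneg_left htail.2 (by positivity)
  -- tail norm bound
  have hnormtail : ‖f - g‖ ≤ Real.sqrt B * Real.sqrt (∑' k : ℕ, ‖a (k+n)‖^2) := by
    have hnt : Filter.Tendsto (fun F : Finset ℕ => ‖∑ k ∈ F, a (k+n) • ψ (k+n)‖)
        Filter.atTop (nhds ‖f - g‖) := (continuous_norm.tendsto _).comp ht
    refine le_of_tendsto hnt (Filter.Eventually.of_forall (fun F => ?_))
    have hinj : ∀ x ∈ F, ∀ y ∈ F, x + n = y + n → x = y := by intro x _ y _ h; omega
    have himg : ∑ k ∈ F, a (k+n) • ψ (k+n) = ∑ j ∈ F.image (· + n), a j • ψ j :=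
      (Finset.sum_image (f := fun j => a j • ψ j) hinj).symm
    rw [himg]
    calc ‖∑ j ∈ F.image (· + n), a j • ψ j‖
        ≤ Real.sqrt B * Real.sqrt (∑ j ∈ F.image (· + n), ‖a j‖^2) :=
          aux_bessel ψ B hB hsum hup a _
      _ = Real.sqrt B * Real.sqrt (∑ k ∈ F, ‖a (k+n)‖^2) := by
          rw [Finset.sum_image (f := fun j => ‖a j‖^2) hinj]
      _ ≤ Real.sqrt B * Real.sqrt (∑' k : ℕ, ‖a (k+n)‖^2) := by
          apply mul_le_mul_of_nonneg_left _ (Real.sqrt_nonneg B)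
          exact Real.sqrt_le_sqrt (Summable.sum_le_tsum F (fun k _ => by positivity) hsq)
  -- projection optimality
  have hproj : ‖f - P n f‖ ≤ ‖f - g‖ := by
    have horth := hPorth n f (P n f - g)
      (Submodule.sub_mem _ (hPmem n f) hgmem)
    have hdecomp : f - g = (f - P n f) + (P n f - g) := by abel
    have hnormsq : ‖f - g‖^2 = ‖f - P n f‖^2 + ‖P n f - g‖^2 := by
      rw [hdecomp, norm_add_sq (𝕜 := ℂ), horth]
      simp
    nlinarith [norm_nonneg (f - P n f), norm_nonneg (f - g), sq_nonneg ‖P n f - g‖]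
  -- final computation
  have hfinal : Real.sqrt B * Real.sqrt (∑' k : ℕ, ‖a (k+n)‖^2)
      ≤ C * (n:ℝ) ^ (-(s - 1/2)) := by
    have hTn : (0:ℝ) ≤ ∑' k : ℕ, ‖a (k+n)‖^2 :=
      tsum_nonneg (fun k => by positivity)
    have h1 : Real.sqrt (∑' k : ℕ, ‖a (k+n)‖^2)
        ≤ Real.sqrt (C₁^2 * ((1/(2*s-1)) * (n:ℝ) ^ (1-2*s))) := Real.sqrt_le_sqrt hT
    have hn0 : (0:ℝ) < (n:ℝ) := by exact_mod_cast hn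
    have hdiv0 : (0:ℝ) ≤ 1/(2*s-1) := le_of_lt (div_pos one_pos (by linarith))
    have h3 : Real.sqrt ((n:ℝ) ^ (1-2*s)) = (n:ℝ) ^ (-(s-1/2)) := by
      rw [Real.sqrt_eq_rpow, ← Real.rpow_mul hn0.le,
        show (1-2*s) * (1/2) = -(s - 1/2) by ring]
    have h2 : Real.sqrt (C₁^2 * ((1/(2*s-1)) * (n:ℝ) ^ (1-2*s)))
        = C₁ * Real.sqrt (1/(2*s-1)) * (n:ℝ) ^ (-(s - 1/2)) := by
      rw [Real.sqrt_mul (by positivity : (0:ℝ) ≤ C₁^2), Real.sqrt_mul hdiv0,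
        Real.sqrt_sq hC₁.le, h3]
      ring
    calc Real.sqrt B * Real.sqrt (∑' k : ℕ, ‖a (k+n)‖^2)
        ≤ Real.sqrt B * (C₁ * Real.sqrt (1/(2*s-1)) * (n:ℝ) ^ (-(s - 1/2))) := by
          apply mul_le_mul_of_nonneg_left (h1.trans_eq h2) (Real.sqrt_nonneg B)
      _ = C * (n:ℝ) ^ (-(s - 1/2)) := by rw [hCdef]; ring
  exact hproj.trans (hnormtail.trans hfinal)
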